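/- The free group F_2 of rank two, acting on itself by left translation, is F_2-paradoxical. -/

import Mathlib

open Pointwise

/-- Nonempty subsets `A` and `B` of a `G`-space `X` are `G`-equidecomposable if there are
finitely many group elements `g₁, …, gₙ` and partitions `A = A₁ ⊔ ⋯ ⊔ Aₙ`,
`B = B₁ ⊔ ⋯ ⊔ Bₙ` with `Aᵢ = gᵢ • Bᵢ` for all `i`. -/
def Equidecomposable (G : Type*) {X : Type*} [Group G] [MulAction G X]
    (A B : Set X) : Prop :=
  ∃ (n : ℕ) (g : Fin n → G) (As Bs : Fin n → Set X),
    A = ⋃ i, As i ∧ B = ⋃ i, Bs i ∧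
    (Pairwise fun i j => Disjoint (As i) (As j)) ∧
    (Pairwise fun i j => Disjoint (Bs i) (Bs j)) ∧
    ∀ i, As i = g i • Bs i

/-- A subset `E` of a `G`-space `X` is `G`-paradoxical if it contains disjoint subsets
`A` and `B`, each of which is `G`-equidecomposable with `E`. -/
def Paradoxical (G : Type*) {X : Type*} [Group G] [MulAction G X] (E : Set X) : Prop :=
  ∃ A B : Set X, A ⊆ E ∧ B ⊆ E ∧ Disjoint A B ∧
    Equidecomposable G A E ∧ Equidecomposable G B E

namespace ParadoxAux

/-- Words whose reduced form starts with letter `(b, s)`. -/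
def S (b s : Bool) : Set (FreeGroup Bool) :=
  {w | w.toWord.head? = some (b, s)}

lemma toWord_letter_mul (b s : Bool) (w : FreeGroup Bool)
    (h : w.toWord.head? ≠ some (b, !s)) :
    (FreeGroup.mk [(b, s)] * w).toWord = (b, s) :: w.toWord := by
  conv_lhs => rw [← FreeGroup.mk_toWord (x := w)]
  rw [FreeGroup.mul_mk, FreeGroup.toWord_mk, List.singleton_append]
  rw [FreeGroup.reduce.cons]
  rw [show FreeGroup.reduce w.toWord = w.toWord from FreeGroup.reduce_toWord w]
  cases hr : w.toWord with
  | nil => rfl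
  | cons hd tl =>
    dsimp only
    rw [if_neg]
    rintro ⟨h1, h2⟩
    apply h
    rw [hr]
    simp only [List.head?_cons, Option.some.injEq]
    obtain ⟨x, y⟩ := hd
    simp_all

lemma toWord_letter_mul_cancel (b s : Bool) (w : FreeGroup Bool) (t : List (Bool × Bool))
    (h : w.toWord = (b, !s) :: t) :
    (FreeGroup.mk [(b, s)] * w).toWord = t ∧ t.head? ≠ some (b, s) := by
  have hred : FreeGroup.reduce w.toWord = w.toWord := FreeGroup.reduce_toWord w
  have ht : t.head? ≠ some (b, s) := by
    intro hh
    cases t with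
    | nil => simp at hh
    | cons u t' =>
      simp only [List.head?_cons, Option.some.injEq] at hh
      subst hh
      exact FreeGroup.reduce.not (L₂ := []) (L₃ := t') (x := b) (b := !s)
        (by rw [hred, h]; simp)
  refine ⟨?_, ht⟩
  conv_lhs => rw [← FreeGroup.mk_toWord (x := w)]
  rw [FreeGroup.mul_mk, FreeGroup.toWord_mk, List.singleton_append,
    FreeGroup.reduce.cons, hred, h]
  dsimp only
  rw [if_pos ⟨rfl, by simp⟩]

/-- The key equation: `(b,s) • S b (!s) = (S b s)ᶜ`. -/
lemma smul_S (b s : Bool) :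
    (FreeGroup.mk [(b, s)]) • S b (!s) = (S b s)ᶜ := by
  have hinv : (FreeGroup.mk [(b, s)])⁻¹ = FreeGroup.mk [(b, !s)] := by
    rw [eq_comm, eq_inv_iff_mul_eq_one, FreeGroup.mul_mk]
    have h0 : FreeGroup.reduce ([(b, !s)] ++ [(b, s)]) =
        FreeGroup.reduce ([] : List (Bool × Bool)) := by
      simp [FreeGroup.reduce]
    simpa using (FreeGroup.reduce.exact h0).trans FreeGroup.one_eq_mk.symm
  ext w
  rw [Set.mem_smul_set_iff_inv_smul_mem, hinv]
  show (FreeGroup.mk [(b, !s)] * w).toWord.head? = some (b, !s) ↔ w ∈ (S b s)ᶜ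
  constructor
  · intro hw hc
    have hc' : w.toWord.head? = some (b, s) := hc
    obtain ⟨t, ht⟩ : ∃ t, w.toWord = (b, s) :: t := by
      cases hh : w.toWord with
      | nil => rw [hh] at hc'; simp at hc'
      | cons u t => rw [hh] at hc'; simp at hc'; exact ⟨t, by rw [hc']⟩
    obtain ⟨h1, h2⟩ := toWord_letter_mul_cancel b (!s) w t (by rw [ht, Bool.not_not])
    rw [h1] at hw
    exact h2 hw
  · intro hw
    have h1 := toWord_letter_mul b (!s) w (by rw [Bool.not_not]; exact hw)
    rw [h1]
    simp

lemma disjoint_S {b s b' s' : Bool} (h : (b, s) ≠ (b', s')) :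
    Disjoint (S b s) (S b' s') := by
  rw [Set.disjoint_left]
  intro w hw hw'
  exact h (Option.some_injective _ ((hw : _ = _).symm.trans hw'))

lemma equi (b : Bool) :
    Equidecomposable (FreeGroup Bool) (S b true ∪ S b false) Set.univ := by
  refine ⟨2, ![1, (FreeGroup.mk [(b, true)])⁻¹], ![S b true, S b false],
    ![S b true, (S b true)ᶜ], ?_, ?_, ?_, ?_, ?_⟩
  · ext w; simp [Fin.exists_fin_two]
  · ext w; simp [Fin.exists_fin_two, em]
  · intro i j hij
    fin_cases i <;> fin_cases j <;> simp_all <;>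
      [exact disjoint_S (by simp); exact (disjoint_S (by simp)).symm]
  · intro i j hij
    fin_cases i <;> fin_cases j <;>
      simp_all [disjoint_compl_right, disjoint_compl_left]
  · intro i
    fin_cases i
    · simp
    · show S b false = (FreeGroup.mk [(b, true)])⁻¹ • (S b true)ᶜ
      rw [← smul_S b true, Bool.not_true, inv_smul_smul]

end ParadoxAux

/-- The free group of rank two, acting on itself by left translation, is paradoxical. -/
theorem freeGroup_paradoxical :
    Paradoxical (FreeGroup Bool) (Set.univ : Set (FreeGroup Bool)) := by
  open ParadoxAux in
  refine ⟨S true true ∪ S true false, S false true ∪ S false false,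
    Set.subset_univ _, Set.subset_univ _, ?_, equi true, equi false⟩
  apply Set.disjoint_union_left.2
  constructor <;> apply Set.disjoint_union_right.2 <;>
    exact ⟨disjoint_S (by simp), disjoint_S (by simp)⟩
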